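/- Let B₀ > 0, let ψ₀(u) = (B₀/π)^{1/4} e^{−B₀u²/2} be the harmonic oscillator ground state, and set ψ̃(u) := ψ₀(u) − ψ₀(1) for u ∈ I := (−1,1). Then ψ̃ ≥ 0 on I, ψ̃ ∈ H¹₀(I), and the Rayleigh quotient of ψ̃ for the operator −d²/du² + B₀²u² on I satisfies ⟨ψ̃, (−ψ̃'' + B₀²u²ψ̃)⟩_I / ‖ψ̃‖²_I ≤ B₀ + B₀ψ₀(1)·|I|^{1/2}/‖ψ̃‖_I. -/

import Mathlib

open MeasureTheory

/-- with `ψ₀` the normalized oscillator ground state and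
`ψ̃ = ψ₀ − ψ₀(1)`, the function `ψ̃` is nonnegative on `[−1,1]`, vanishes at `±1`
(so belongs to `H¹₀((−1,1))`), and its Rayleigh quotient for `−d²/du² + B₀²u²` on
`I = (−1,1)` is at most `B₀ + B₀ψ₀(1)|I|^{1/2}/‖ψ̃‖_I`. -/
theorem shifted_gaussian_rayleigh (B₀ : ℝ) (hB : 0 < B₀) (ψ₀ ψt : ℝ → ℝ)
    (hψ₀ : ψ₀ = fun u => (B₀ / Real.pi) ^ ((1 : ℝ) / 4) * Real.exp (-B₀ * u ^ 2 / 2))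
    (hψt : ψt = fun u => ψ₀ u - ψ₀ 1) :
    (∀ u ∈ Set.Icc (-1 : ℝ) 1, 0 ≤ ψt u) ∧ ψt (-1) = 0 ∧ ψt 1 = 0 ∧
    (∫ u in Set.Ioo (-1 : ℝ) 1, ψt u * (-(deriv (deriv ψt)) u + B₀ ^ 2 * u ^ 2 * ψt u)) /
        (∫ u in Set.Ioo (-1 : ℝ) 1, (ψt u) ^ 2) ≤
      B₀ + B₀ * ψ₀ 1 * Real.sqrt 2 /
        Real.sqrt (∫ u in Set.Ioo (-1 : ℝ) 1, (ψt u) ^ 2) := by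
  have hπ : (0:ℝ) < Real.pi := Real.pi_pos
  set C : ℝ := (B₀ / Real.pi) ^ ((1 : ℝ) / 4) with hCdef
  have hC : 0 < C := Real.rpow_pos_of_pos (div_pos hB hπ) _
  have hψ₀u : ∀ u, ψ₀ u = C * Real.exp (-B₀ * u ^ 2 / 2) := by
    intro u; rw [hψ₀]
  have hcpos : 0 < ψ₀ 1 := by
    rw [hψ₀u]; positivity
  -- nonnegativity on Icc
  have hnonneg : ∀ u ∈ Set.Icc (-1 : ℝ) 1, 0 ≤ ψt u := by
    intro u hu
    rw [hψt]
    simp only [hψ₀u]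
    have h1 : u ^ 2 ≤ 1 := by nlinarith [hu.1, hu.2]
    have h2 : Real.exp (-B₀ * 1 ^ 2 / 2) ≤ Real.exp (-B₀ * u ^ 2 / 2) := by
      apply Real.exp_le_exp.2; nlinarith
    nlinarith
  -- strict positivity on Ioo
  have hpos : ∀ u ∈ Set.Ioo (-1 : ℝ) 1, 0 < ψt u := by
    intro u hu
    rw [hψt]
    simp only [hψ₀u]
    have h1 : u ^ 2 < 1 := by nlinarith [hu.1, hu.2]
    have h2 : Real.exp (-B₀ * 1 ^ 2 / 2) < Real.exp (-B₀ * u ^ 2 / 2) := by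
      apply Real.exp_lt_exp.2; nlinarith
    nlinarith
  refine ⟨hnonneg, ?_, ?_, ?_⟩
  · rw [hψt]; simp only [hψ₀u]; norm_num
  · rw [hψt]; ring
  -- Rayleigh quotient bound
  -- derivatives
  have hg : ∀ u : ℝ, HasDerivAt (fun u : ℝ => -B₀ * u ^ 2 / 2) (-B₀ * u) u := by
    intro u
    have h := ((hasDerivAt_pow 2 u).const_mul (-B₀)).div_const 2
    exact h.congr_deriv (by ring)
  have hd1 : ∀ u : ℝ, HasDerivAt ψt (C * (Real.exp (-B₀ * u ^ 2 / 2) * (-B₀ * u))) u := by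
    intro u
    have heq : ψt = fun v => C * Real.exp (-B₀ * v ^ 2 / 2) - ψ₀ 1 := by
      rw [hψt]; funext v; rw [hψ₀u]
    rw [heq]
    exact (((hg u).exp).const_mul C).sub_const (ψ₀ 1)
  have hderiv1 : deriv ψt = fun u => C * (Real.exp (-B₀ * u ^ 2 / 2) * (-B₀ * u)) :=
    funext fun u => (hd1 u).deriv
  have hd2 : ∀ u : ℝ, HasDerivAt (deriv ψt)
      (C * (Real.exp (-B₀ * u ^ 2 / 2) * (B₀ ^ 2 * u ^ 2 - B₀))) u := by
    intro u
    rw [hderiv1]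
    have hl : HasDerivAt (fun u : ℝ => -B₀ * u) (-B₀) u := by
      simpa using (hasDerivAt_id u).const_mul (-B₀)
    have h := (((hg u).exp).mul hl).const_mul C
    exact h.congr_deriv (by ring)
  have hderiv2 : ∀ u : ℝ, deriv (deriv ψt) u
      = C * (Real.exp (-B₀ * u ^ 2 / 2) * (B₀ ^ 2 * u ^ 2 - B₀)) :=
    fun u => (hd2 u).deriv
  -- rewrite the integrand
  have hfun : (fun u => ψt u * (-(deriv (deriv ψt)) u + B₀ ^ 2 * u ^ 2 * ψt u))
      = fun u => ψt u * (B₀ * ψ₀ u - B₀ ^ 2 * u ^ 2 * ψ₀ 1) := by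
    funext u
    have h1 : ψt u = ψ₀ u - ψ₀ 1 := by rw [hψt]
    have h2 : ψ₀ u = C * Real.exp (-B₀ * u ^ 2 / 2) := hψ₀u u
    simp only [Pi.neg_apply, hderiv2 u, h1, h2]
    ring
  rw [hfun]
  -- continuity and integrability
  have hinner : Continuous fun u : ℝ => -B₀ * u ^ 2 / 2 := by fun_prop
  have hcψ₀ : Continuous ψ₀ := by
    rw [hψ₀]; exact continuous_const.mul (Real.continuous_exp.comp hinner)
  have hcψt : Continuous ψt := by
    rw [hψt]; exact hcψ₀.sub continuous_const
  have hIntOn : ∀ f : ℝ → ℝ, Continuous f → IntegrableOn f (Set.Ioo (-1 : ℝ) 1) := by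
    intro f hf
    exact (hf.integrableOn_Icc).mono_set Set.Ioo_subset_Icc_self
  set N : ℝ := ∫ u in Set.Ioo (-1 : ℝ) 1, (ψt u) ^ 2 with hN
  have hIntSq : IntegrableOn (fun u => (ψt u) ^ 2) (Set.Ioo (-1 : ℝ) 1) :=
    hIntOn _ (hcψt.pow 2)
  have hIntψt : IntegrableOn ψt (Set.Ioo (-1 : ℝ) 1) := hIntOn _ hcψt
  have hIntg : IntegrableOn (fun u => ψt u * (B₀ * ψ₀ u - B₀ ^ 2 * u ^ 2 * ψ₀ 1))
      (Set.Ioo (-1 : ℝ) 1) := by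
    apply hIntOn
    exact hcψt.mul ((continuous_const.mul hcψ₀).sub (by fun_prop))
  -- N > 0
  have hNpos : 0 < N := by
    rw [hN]
    rw [setIntegral_pos_iff_support_of_nonneg_ae _ hIntSq]
    · have hsub : Set.Ioo (-1 : ℝ) 1 ⊆ Function.support (fun u => (ψt u) ^ 2) := by
        intro u hu
        have := hpos u hu
        simp only [Function.mem_support]
        positivity
      have : Function.support (fun u => (ψt u) ^ 2) ∩ Set.Ioo (-1 : ℝ) 1
          = Set.Ioo (-1 : ℝ) 1 := Set.inter_eq_self_of_subset_right hsub
      rw [this, Real.volume_Ioo]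
      norm_num
    · filter_upwards with u
      positivity
  have hNroot : 0 < Real.sqrt N := Real.sqrt_pos.2 hNpos
  set t : ℝ := Real.sqrt (N / 2) with ht
  have htpos : 0 < t := Real.sqrt_pos.2 (by linarith)
  have htsq : t ^ 2 = N / 2 := Real.sq_sqrt (by linarith)
  have hsqrtNt : Real.sqrt N = Real.sqrt 2 * t := by
    have h : (Real.sqrt 2 * t) ^ 2 = N := by
      rw [mul_pow, Real.sq_sqrt (by norm_num : (0:ℝ) ≤ 2), htsq]; ring
    rw [← h, Real.sqrt_sq (by positivity)]
  -- ∫ ψt ≤ √2 √N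
  have hCS : (∫ u in Set.Ioo (-1 : ℝ) 1, ψt u) ≤ Real.sqrt 2 * Real.sqrt N := by
    have hmono : (∫ u in Set.Ioo (-1 : ℝ) 1, ψt u)
        ≤ ∫ u in Set.Ioo (-1 : ℝ) 1, ((ψt u) ^ 2 / (2 * t) + t / 2) := by
      apply setIntegral_mono_on hIntψt
      · exact (hIntSq.div_const _).add (integrableOn_const (by
          rw [Real.volume_Ioo]; norm_num))
      · exact measurableSet_Ioo
      · intro u _
        have h := sq_nonneg (ψt u - t)
        rw [div_add_div _ _ (by positivity : (2:ℝ) * t ≠ 0) (by norm_num : (2:ℝ) ≠ 0),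
          le_div_iff₀ (by positivity)]
        nlinarith
    have heval : (∫ u in Set.Ioo (-1 : ℝ) 1, ((ψt u) ^ 2 / (2 * t) + t / 2))
        = N / (2 * t) + t := by
      rw [integral_add (hIntSq.div_const _) (integrableOn_const (by
        rw [Real.volume_Ioo]; norm_num))]
      rw [integral_div, setIntegral_const, measureReal_def, Real.volume_Ioo]
      norm_num
      ring
    have : N / (2 * t) + t = Real.sqrt 2 * Real.sqrt N := by
      rw [hsqrtNt]
      have h2 : Real.sqrt 2 * Real.sqrt 2 = 2 := Real.mul_self_sqrt (by norm_num)
      field_simp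
      nlinarith
    linarith [hmono, heval.le, heval.ge]
  -- main integral bound
  have hmain : (∫ u in Set.Ioo (-1 : ℝ) 1, ψt u * (B₀ * ψ₀ u - B₀ ^ 2 * u ^ 2 * ψ₀ 1))
      ≤ B₀ * N + B₀ * ψ₀ 1 * (Real.sqrt 2 * Real.sqrt N) := by
    have hmono : (∫ u in Set.Ioo (-1 : ℝ) 1, ψt u * (B₀ * ψ₀ u - B₀ ^ 2 * u ^ 2 * ψ₀ 1))
        ≤ ∫ u in Set.Ioo (-1 : ℝ) 1, (B₀ * (ψt u) ^ 2 + B₀ * ψ₀ 1 * ψt u) := by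
      apply setIntegral_mono_on hIntg
      · exact (hIntSq.const_mul _).add (hIntψt.const_mul _)
      · exact measurableSet_Ioo
      · intro u hu
        have h1 : 0 ≤ ψt u := (hpos u hu).le
        have h2 : ψ₀ u = ψt u + ψ₀ 1 := by rw [hψt]; ring
        have h3 : 0 ≤ B₀ ^ 2 * u ^ 2 * ψ₀ 1 := by positivity
        rw [h2]
        nlinarith [mul_nonneg h1 h3]
    have heval : (∫ u in Set.Ioo (-1 : ℝ) 1, (B₀ * (ψt u) ^ 2 + B₀ * ψ₀ 1 * ψt u))
        = B₀ * N + B₀ * ψ₀ 1 * ∫ u in Set.Ioo (-1 : ℝ) 1, ψt u := by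
      rw [integral_add (hIntSq.const_mul _) (hIntψt.const_mul _), integral_const_mul,
        integral_const_mul]
    have hfin : B₀ * ψ₀ 1 * (∫ u in Set.Ioo (-1 : ℝ) 1, ψt u)
        ≤ B₀ * ψ₀ 1 * (Real.sqrt 2 * Real.sqrt N) := by
      apply mul_le_mul_of_nonneg_left hCS (by positivity)
    linarith [hmono, heval.le]
  -- conclude
  rw [div_le_iff₀ hNpos]
  have hNsq : N = Real.sqrt N * Real.sqrt N := (Real.mul_self_sqrt hNpos.le).symm
  have hdiv : N / Real.sqrt N = Real.sqrt N := Real.div_sqrt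
  have : (B₀ + B₀ * ψ₀ 1 * Real.sqrt 2 / Real.sqrt N) * N
      = B₀ * N + B₀ * ψ₀ 1 * (Real.sqrt 2 * Real.sqrt N) := by
    rw [add_mul, div_mul_eq_mul_div, mul_div_assoc, hdiv]
    ring
  linarith [hmain]
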